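/- Assume conditions (C1) and (C2) and the a_min bound (Eq. 13) with 0 < a_min ≤ a_max. Then the MFPI map F = (F_1,…,F_n) is a contraction on the box B with respect to the supremum metric: there exists a constant L with 0 ≤ L < 1 such that max_i |F_i(a) − F_i(â)| ≤ L · max_i |a_i − â_i| for all a, â ∈ B. -/

import Mathlib

lemma eq13_key {ι : Type*} (s : Finset ι) (d : ι → ℝ) (P amin amax c : ℝ)
    (hamin : 0 < amin) (haminmax : amin ≤ amax) (hP : 0 < P)
    (h13 : (Real.sqrt (c * ∑ g ∈ s, |d g|) - ∑ g ∈ s.filter (fun g => d g < 0), d g)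
        / (2 * P + ∑ g ∈ s.filter (fun g => 0 ≤ d g), d g / amax) < amin) :
    Real.sqrt (c * ∑ g ∈ s, |d g|) <
      2 * amin * (P + ∑ g ∈ s, (if 0 ≤ d g then d g / (2*amax) else d g / (2*amin))) := by
  classical
  have hamax : 0 < amax := hamin.trans_le haminmax
  have hpos : 0 ≤ ∑ g ∈ s.filter (fun g => 0 ≤ d g), d g / amax :=
    Finset.sum_nonneg fun g hg => div_nonneg (Finset.mem_filter.mp hg).2 hamax.le
  have hden : 0 < 2 * P + ∑ g ∈ s.filter (fun g => 0 ≤ d g), d g / amax := by linarith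
  rw [div_lt_iff₀ hden] at h13
  have hneg : s.filter (fun g => ¬ 0 ≤ d g) = s.filter (fun g => d g < 0) := by
    apply Finset.filter_congr; intro g _; simp [not_le]
  have hsplit : ∑ g ∈ s, (if 0 ≤ d g then d g / (2*amax) else d g / (2*amin))
      = ∑ g ∈ s.filter (fun g => 0 ≤ d g), d g / (2*amax)
        + ∑ g ∈ s.filter (fun g => d g < 0), d g / (2*amin) := by
    rw [Finset.sum_ite, hneg]
  have hA : 2 * amin * ∑ g ∈ s.filter (fun g => 0 ≤ d g), d g / (2*amax)
      = amin * ∑ g ∈ s.filter (fun g => 0 ≤ d g), d g / amax := by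
    rw [Finset.mul_sum, Finset.mul_sum]
    refine Finset.sum_congr rfl fun g _ => by field_simp
  have hB : 2 * amin * ∑ g ∈ s.filter (fun g => d g < 0), d g / (2*amin)
      = ∑ g ∈ s.filter (fun g => d g < 0), d g := by
    rw [Finset.mul_sum]
    refine Finset.sum_congr rfl fun g _ => by field_simp
  rw [hsplit]
  nlinarith [h13, hA, hB]

lemma mfpi_aux {ι : Type*} (s : Finset ι) (d : ι → ℝ) (P c amin amax Δ : ℝ)
    (hamin : 0 < amin) (haminmax : amin ≤ amax) (hc : 0 < c)
    (hkey : Real.sqrt (c * ∑ g ∈ s, |d g|) <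
      2 * amin * (P + ∑ g ∈ s, (if 0 ≤ d g then d g / (2*amax) else d g / (2*amin))))
    (a a' : ι → ℝ)
    (ha : ∀ g ∈ s, amin ≤ a g ∧ a g ≤ amax) (ha' : ∀ g ∈ s, amin ≤ a' g ∧ a' g ≤ amax)
    (hΔ0 : 0 ≤ Δ) (hΔ : ∀ g ∈ s, |a g - a' g| ≤ Δ) :
    |c / (2 * (P + ∑ g ∈ s, d g / (2 * a g))) - c / (2 * (P + ∑ g ∈ s, d g / (2 * a' g)))|
      ≤ (c * ∑ g ∈ s, |d g|)
        / (2 * amin * (P + ∑ g ∈ s, (if 0 ≤ d g then d g / (2*amax) else d g / (2*amin))))^2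
        * Δ := by
  classical
  have hamax : 0 < amax := hamin.trans_le haminmax
  set Dm : ℝ := P + ∑ g ∈ s, (if 0 ≤ d g then d g / (2*amax) else d g / (2*amin)) with hDm
  set Da : ℝ := P + ∑ g ∈ s, d g / (2 * a g) with hDa
  set Da' : ℝ := P + ∑ g ∈ s, d g / (2 * a' g) with hDa'
  set S : ℝ := ∑ g ∈ s, |d g| with hSdef
  have hS0 : 0 ≤ S := Finset.sum_nonneg fun g _ => abs_nonneg _
  have hsq0 : 0 ≤ Real.sqrt (c * S) := Real.sqrt_nonneg _
  have hDm0 : 0 < Dm := by nlinarith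
  have hbound : ∀ b : ι → ℝ, (∀ g ∈ s, amin ≤ b g ∧ b g ≤ amax) →
      Dm ≤ P + ∑ g ∈ s, d g / (2 * b g) := by
    intro b hb
    rw [hDm]
    refine add_le_add_right (Finset.sum_le_sum fun g hg => ?_) P
    have hb1 := (hb g hg).1
    have hb2 := (hb g hg).2
    have hbpos : 0 < b g := lt_of_lt_of_le hamin hb1
    by_cases hdg : 0 ≤ d g
    · simp only [if_pos hdg]
      apply div_le_div_of_nonneg_left hdg (by linarith) (by linarith)
    · simp only [if_neg hdg]
      push_neg at hdg
      rw [div_le_div_iff₀ (by linarith) (by linarith)]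
      nlinarith
  have hDaLB : Dm ≤ Da := hbound a ha
  have hDaLB' : Dm ≤ Da' := hbound a' ha'
  have hDa0 : 0 < Da := lt_of_lt_of_le hDm0 hDaLB
  have hDa0' : 0 < Da' := lt_of_lt_of_le hDm0 hDaLB'
  have hdiff : Da' - Da = ∑ g ∈ s, d g * (a g - a' g) / (2 * a g * a' g) := by
    rw [hDa, hDa', add_sub_add_left_eq_sub, ← Finset.sum_sub_distrib]
    refine Finset.sum_congr rfl fun g hg => ?_
    have h1 : (0:ℝ) < a g := lt_of_lt_of_le hamin (ha g hg).1
    have h2 : (0:ℝ) < a' g := lt_of_lt_of_le hamin (ha' g hg).1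
    field_simp
  have habs : |Da' - Da| ≤ S * Δ / (2 * amin^2) := by
    rw [hdiff]
    calc |∑ g ∈ s, d g * (a g - a' g) / (2 * a g * a' g)|
        ≤ ∑ g ∈ s, |d g * (a g - a' g) / (2 * a g * a' g)| := Finset.abs_sum_le_sum_abs _ _
      _ ≤ ∑ g ∈ s, |d g| * (Δ / (2 * amin^2)) := by
          refine Finset.sum_le_sum fun g hg => ?_
          have h1 : amin ≤ a g := (ha g hg).1
          have h2 : amin ≤ a' g := (ha' g hg).1
          have h1' : (0:ℝ) < a g := lt_of_lt_of_le hamin h1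
          have h2' : (0:ℝ) < a' g := lt_of_lt_of_le hamin h2
          have hden : (0:ℝ) < 2 * a g * a' g := by positivity
          have hΔg := hΔ g hg
          have h3 : 2 * amin^2 ≤ 2 * a g * a' g := by nlinarith
          have h4 : |d g| * |a g - a' g| ≤ |d g| * Δ :=
            mul_le_mul_of_nonneg_left hΔg (abs_nonneg _)
          have h5 : (0:ℝ) < 2 * amin^2 := by positivity
          rw [abs_div, abs_mul, abs_of_pos hden]
          calc |d g| * |a g - a' g| / (2 * a g * a' g)
              ≤ |d g| * Δ / (2 * amin^2) :=
                div_le_div₀ (by positivity) h4 h5 h3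
            _ = |d g| * (Δ / (2 * amin^2)) := by ring
      _ = S * Δ / (2 * amin^2) := by
          rw [← Finset.sum_mul, hSdef]; ring
  clear_value Dm Da Da' S
  have hF : c / (2 * Da) - c / (2 * Da') = c * (Da' - Da) / (2 * (Da * Da')) := by
    field_simp
  rw [hF, abs_div, abs_mul, abs_of_pos hc,
    abs_of_pos (by positivity : (0:ℝ) < 2 * (Da * Da'))]
  have step1 : c * |Da' - Da| / (2 * (Da * Da'))
      ≤ c * (S * Δ / (2*amin^2)) / (2 * (Dm * Dm)) := by
    apply div_le_div₀ (by positivity) (mul_le_mul_of_nonneg_left habs hc.le) (by positivity)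
    nlinarith [mul_le_mul hDaLB hDaLB' hDm0.le hDa0.le]
  refine step1.trans (le_of_eq ?_)
  field_simp

/-- Denominator `D_i(a)` of the MFPI map. -/
noncomputable def Dden (n : ℕ) (Pβ Pα : Fin n → ℝ) (lβ lα : Fin n → Fin n → ℝ)
    (a : Fin n → ℝ) (i : Fin n) : ℝ :=
  Pβ i - Pα i + ∑ g ∈ Finset.univ.erase i, (lα i g - lβ i g) / (2 * a g)

/-- MFPI map `F_i(a)`. -/
noncomputable def Fmfpi (n : ℕ) (Pβ Pα : Fin n → ℝ) (lβ lα : Fin n → Fin n → ℝ)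
    (a : Fin n → ℝ) (i : Fin n) : ℝ :=
  (lβ i i - lα i i) / (2 * Dden n Pβ Pα lβ lα a i)

/-- Under conditions (C1), (C2) and the `a_min` bound (Eq. 13), the MFPI map is a
    contraction on the box `B` with respect to the supremum metric. -/
theorem mfpi_contraction_on_box
    (n : ℕ) (hn : 1 ≤ n)
    (Pβ Pα : Fin n → ℝ) (lβ lα : Fin n → Fin n → ℝ)
    (amin amax : ℝ) (hamin : 0 < amin) (haminmax : amin ≤ amax)
    (hC1 : ∀ i, 0 < lβ i i - lα i i)
    (hC2 : ∀ i, 0 < Pβ i - Pα i)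
    (hEq13 : ∀ i : Fin n,
      (Real.sqrt ((lβ i i - lα i i) *
          ∑ g ∈ Finset.univ.erase i, |lα i g - lβ i g|)
        - ∑ g ∈ (Finset.univ.erase i).filter (fun g => lα i g - lβ i g < 0),
            (lα i g - lβ i g))
      / (2 * (Pβ i - Pα i)
        + ∑ g ∈ (Finset.univ.erase i).filter (fun g => 0 ≤ lα i g - lβ i g),
            (lα i g - lβ i g) / amax)
      < amin) :
    ∃ L : ℝ, 0 ≤ L ∧ L < 1 ∧
      ∀ a a' : Fin n → ℝ,
        (∀ g, amin ≤ a g ∧ a g ≤ amax) → (∀ g, amin ≤ a' g ∧ a' g ≤ amax) →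
        Finset.univ.sup' (Finset.univ_nonempty_iff.mpr ⟨⟨0, hn⟩⟩)
            (fun i => |Fmfpi n Pβ Pα lβ lα a i - Fmfpi n Pβ Pα lβ lα a' i|)
          ≤ L * Finset.univ.sup' (Finset.univ_nonempty_iff.mpr ⟨⟨0, hn⟩⟩)
            (fun i => |a i - a' i|) := by
  classical
  have hamax : 0 < amax := hamin.trans_le haminmax
  have hne : (Finset.univ : Finset (Fin n)).Nonempty := Finset.univ_nonempty_iff.mpr ⟨⟨0, hn⟩⟩
  have hkey : ∀ i : Fin n,
      Real.sqrt ((lβ i i - lα i i) * ∑ g ∈ Finset.univ.erase i, |lα i g - lβ i g|)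
        < 2 * amin * (Pβ i - Pα i + ∑ g ∈ Finset.univ.erase i,
            (if 0 ≤ lα i g - lβ i g then (lα i g - lβ i g) / (2*amax)
              else (lα i g - lβ i g) / (2*amin))) := by
    intro i
    exact eq13_key (Finset.univ.erase i) (fun g => lα i g - lβ i g) (Pβ i - Pα i)
      amin amax (lβ i i - lα i i) hamin haminmax (hC2 i) (hEq13 i)
  set Li : Fin n → ℝ := fun i =>
    ((lβ i i - lα i i) * ∑ g ∈ Finset.univ.erase i, |lα i g - lβ i g|)
      / (2 * amin * (Pβ i - Pα i + ∑ g ∈ Finset.univ.erase i,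
          (if 0 ≤ lα i g - lβ i g then (lα i g - lβ i g) / (2*amax)
            else (lα i g - lβ i g) / (2*amin))))^2 with hLi
  have hS0 : ∀ i, (0:ℝ) ≤ ∑ g ∈ Finset.univ.erase i, |lα i g - lβ i g| :=
    fun i => Finset.sum_nonneg fun g _ => abs_nonneg _
  have hDm0 : ∀ i, 0 < Pβ i - Pα i + ∑ g ∈ Finset.univ.erase i,
      (if 0 ≤ lα i g - lβ i g then (lα i g - lβ i g) / (2*amax)
        else (lα i g - lβ i g) / (2*amin)) := by
    intro i
    have h1 := hkey i
    have h2 := Real.sqrt_nonneg ((lβ i i - lα i i) * ∑ g ∈ Finset.univ.erase i, |lα i g - lβ i g|)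
    nlinarith
  have hLnn : ∀ i, 0 ≤ Li i := by
    intro i
    exact div_nonneg (mul_nonneg (hC1 i).le (hS0 i)) (sq_nonneg _)
  have hLlt : ∀ i, Li i < 1 := by
    intro i
    rw [hLi]
    have hd0 : (0:ℝ) < (2 * amin * (Pβ i - Pα i + ∑ g ∈ Finset.univ.erase i,
        (if 0 ≤ lα i g - lβ i g then (lα i g - lβ i g) / (2*amax)
          else (lα i g - lβ i g) / (2*amin))))^2 := by
      have := hDm0 i
      positivity
    rw [div_lt_one hd0]
    have hcs : (0:ℝ) ≤ (lβ i i - lα i i) * ∑ g ∈ Finset.univ.erase i, |lα i g - lβ i g| :=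
      mul_nonneg (hC1 i).le (hS0 i)
    nlinarith [hkey i, Real.sq_sqrt hcs, Real.sqrt_nonneg
      ((lβ i i - lα i i) * ∑ g ∈ Finset.univ.erase i, |lα i g - lβ i g|)]
  refine ⟨Finset.univ.sup' hne Li, ?_, ?_, ?_⟩
  · exact le_trans (hLnn ⟨0, hn⟩) (Finset.le_sup' Li (Finset.mem_univ _))
  · exact (Finset.sup'_lt_iff hne).mpr fun i _ => hLlt i
  · intro a a' ha ha'
    have hΔ0 : 0 ≤ Finset.univ.sup' (Finset.univ_nonempty_iff.mpr ⟨⟨0, hn⟩⟩)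
        (fun i => |a i - a' i|) :=
      le_trans (abs_nonneg (a ⟨0, hn⟩ - a' ⟨0, hn⟩))
        (Finset.le_sup' (fun i => |a i - a' i|) (Finset.mem_univ _))
    apply Finset.sup'_le
    intro i _
    have hmain := mfpi_aux (Finset.univ.erase i) (fun g => lα i g - lβ i g)
      (Pβ i - Pα i) (lβ i i - lα i i) amin amax
      (Finset.univ.sup' (Finset.univ_nonempty_iff.mpr ⟨⟨0, hn⟩⟩) (fun i => |a i - a' i|))
      hamin haminmax (hC1 i) (hkey i) a a'
      (fun g _ => ha g) (fun g _ => ha' g) hΔ0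
      (fun g _ => Finset.le_sup' (fun i => |a i - a' i|) (Finset.mem_univ g))
    calc |Fmfpi n Pβ Pα lβ lα a i - Fmfpi n Pβ Pα lβ lα a' i|
        ≤ Li i * Finset.univ.sup' (Finset.univ_nonempty_iff.mpr ⟨⟨0, hn⟩⟩)
            (fun i => |a i - a' i|) := by
          rw [hLi]
          simpa [Fmfpi, Dden] using hmain
      _ ≤ _ := mul_le_mul_of_nonneg_right (Finset.le_sup' Li (Finset.mem_univ i)) hΔ0
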